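/- Let R = K[[X,Y,U,V]]/(XY − UV) and M' = coker(R → R^4, 1 ↦ (x,y,u,v)). Then M' is a torsion-free R-module; in particular x is a non-zerodivisor on M'. -/

import Mathlib

open CategoryTheory

set_option maxHeartbeats 1000000
set_option synthInstance.maxHeartbeats 400000

/-- `R = K[[X,Y,U,V]]/(XY - UV)`. -/
noncomputable abbrev psHypersurface (K : Type) [Field K] : Type :=
  MvPowerSeries (Fin 4) K ⧸
    Ideal.span {(MvPowerSeries.X 0 : MvPowerSeries (Fin 4) K) * MvPowerSeries.X 1 -
      MvPowerSeries.X 2 * MvPowerSeries.X 3}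

/-- `M' = coker(R → R^4, 1 ↦ (x,y,u,v)) = R^4/R·(x e_1 + y e_2 + u e_3 + v e_4)`. -/
noncomputable abbrev Mprime (K : Type) [Field K] (x y u v : psHypersurface K) : Type :=
  (Fin 4 → psHypersurface K) ⧸ Submodule.span (psHypersurface K) {![x, y, u, v]}

namespace MprimeAux

open MvPowerSeries

variable {K : Type} [Field K]

/-- `g` has no monomials involving variable `i`. -/
def Off (i : Fin 4) (g : MvPowerSeries (Fin 4) K) : Prop :=
  ∀ m : Fin 4 →₀ ℕ, m i ≠ 0 → MvPowerSeries.coeff m g = 0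

lemma off_X {i j : Fin 4} (h : j ≠ i) : Off i (X j : MvPowerSeries (Fin 4) K) := by
  intro m hm
  rw [coeff_X]
  rw [if_neg]
  intro he
  subst he
  rw [Finsupp.single_eq_of_ne' h] at hm
  exact hm rfl

lemma off_mul {i : Fin 4} {g h : MvPowerSeries (Fin 4) K} (hg : Off i g) (hh : Off i h) :
    Off i (g * h) := by
  intro m hm
  rw [coeff_mul]
  apply Finset.sum_eq_zero
  rintro ⟨p, q⟩ hpq
  rw [Finset.HasAntidiagonal.mem_antidiagonal] at hpq
  by_cases hp : p i = 0
  · have hq : q i ≠ 0 := by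
      intro h0
      apply hm
      rw [← hpq, Finsupp.add_apply, hp, h0]
    rw [hh q hq, mul_zero]
  · rw [hg p hp, zero_mul]

lemma off_add {i : Fin 4} {g h : MvPowerSeries (Fin 4) K} (hg : Off i g) (hh : Off i h) :
    Off i (g + h) := by
  intro m hm
  rw [map_add, hg m hm, hh m hm, add_zero]

lemma off_eq_zero {i : Fin 4} {h : MvPowerSeries (Fin 4) K} (ho : Off i h)
    (hd : (X i : MvPowerSeries (Fin 4) K) ∣ h) : h = 0 := by
  ext m
  rw [map_zero]
  by_cases hm : m i = 0
  · exact X_dvd_iff.mp hd m hm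
  · exact ho m hm

lemma X_ne_zero' (i : Fin 4) : (X i : MvPowerSeries (Fin 4) K) ≠ 0 := by
  intro h
  have := congrArg (MvPowerSeries.coeff (Finsupp.single i 1)) h
  rw [coeff_X, if_pos rfl, map_zero] at this
  exact one_ne_zero this

/-- Split a power series as (part without `X 0`) + `X 0 ·` (rest). -/
lemma split (g : MvPowerSeries (Fin 4) K) :
    ∃ g₀ g₁ : MvPowerSeries (Fin 4) K, Off 0 g₀ ∧ g = g₀ + X 0 * g₁ := by
  let g₀ : MvPowerSeries (Fin 4) K := fun m => if m 0 = 0 then MvPowerSeries.coeff m g else 0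
  have hco : ∀ m : Fin 4 →₀ ℕ, MvPowerSeries.coeff m g₀ =
      if m 0 = 0 then MvPowerSeries.coeff m g else 0 := fun m => rfl
  have hoff : Off 0 g₀ := by
    intro m hm
    rw [hco, if_neg hm]
  have hdvd : (X 0 : MvPowerSeries (Fin 4) K) ∣ g - g₀ := by
    rw [X_dvd_iff]
    intro m hm
    rw [map_sub, hco, if_pos hm, sub_self]
  obtain ⟨g₁, hg₁⟩ := hdvd
  exact ⟨g₀, g₁, hoff, by rw [← hg₁]; ring⟩

lemma dvd_of_X_dvd_X_mul {i j : Fin 4} (hij : i ≠ j) {h : MvPowerSeries (Fin 4) K}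
    (hd : (X i : MvPowerSeries (Fin 4) K) ∣ X j * h) :
    (X i : MvPowerSeries (Fin 4) K) ∣ h := by
  rw [X_dvd_iff] at hd ⊢
  intro m hm
  have h1 : (Finsupp.single j 1 + m : Fin 4 →₀ ℕ) i = 0 := by
    rw [Finsupp.add_apply, Finsupp.single_eq_of_ne' (Ne.symm hij), hm]
  have h2 := hd _ h1
  rwa [X_def, coeff_add_monomial_mul, one_mul] at h2

/-- `X 0` is a non-zerodivisor modulo `X 0 X 1 - X 2 X 3`. -/
lemma lemB {G H : MvPowerSeries (Fin 4) K}
    (h : X 0 * G = (X 0 * X 1 - X 2 * X 3) * H) :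
    (X 0 * X 1 - X 2 * X 3 : MvPowerSeries (Fin 4) K) ∣ G := by
  obtain ⟨H₀, H₁, hO, rfl⟩ := split H
  have key : X 2 * X 3 * H₀ =
      X 0 * (X 1 * H₀ + (X 0 * X 1 - X 2 * X 3) * H₁ - G) := by
    linear_combination h
  have hdvd : (X 0 : MvPowerSeries (Fin 4) K) ∣ X 2 * X 3 * H₀ := ⟨_, key⟩
  have hoffp : Off 0 (X 2 * X 3 * H₀ : MvPowerSeries (Fin 4) K) :=
    off_mul (off_mul (off_X (by decide)) (off_X (by decide))) hO
  have h0 : H₀ = 0 := by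
    have := off_eq_zero hoffp hdvd
    rcases mul_eq_zero.mp this with h' | h'
    · rcases mul_eq_zero.mp h' with h'' | h''
      · exact absurd h'' (X_ne_zero' 2)
      · exact absurd h'' (X_ne_zero' 3)
    · exact h'
  subst h0
  refine ⟨H₁, mul_left_cancel₀ (X_ne_zero' 0) ?_⟩
  linear_combination h

/-- extraction of the factor `X 0` from the syzygy relation. -/
lemma lemC {A B P : MvPowerSeries (Fin 4) K}
    (h : A * X 1 = B * X 0 + P * (X 0 * X 1 - X 2 * X 3)) :
    ∃ T Q : MvPowerSeries (Fin 4) K, A = X 0 * T + (X 0 * X 1 - X 2 * X 3) * Q := by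
  obtain ⟨A₀, A₁, hA, rfl⟩ := split A
  obtain ⟨P₀, P₁, hP, rfl⟩ := split P
  have key : A₀ * X 1 + P₀ * (X 2 * X 3) =
      X 0 * (B + P₀ * X 1 + P₁ * (X 0 * X 1 - X 2 * X 3) - A₁ * X 1) := by
    linear_combination h
  have hdvd : (X 0 : MvPowerSeries (Fin 4) K) ∣ A₀ * X 1 + P₀ * (X 2 * X 3) := ⟨_, key⟩
  have hoffs : Off 0 (A₀ * X 1 + P₀ * (X 2 * X 3) : MvPowerSeries (Fin 4) K) :=
    off_add (off_mul hA (off_X (by decide)))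
      (off_mul hP (off_mul (off_X (by decide)) (off_X (by decide))))
  have h2 : A₀ * X 1 + P₀ * (X 2 * X 3) = 0 := off_eq_zero hoffs hdvd
  have hd2 : (X 2 : MvPowerSeries (Fin 4) K) ∣ X 1 * A₀ := ⟨-(X 3 * P₀), by linear_combination h2⟩
  obtain ⟨A', rfl⟩ := dvd_of_X_dvd_X_mul (show (2 : Fin 4) ≠ 1 by decide) hd2
  have h3 : A' * X 1 + P₀ * X 3 = 0 := by
    apply mul_left_cancel₀ (X_ne_zero' 2)
    linear_combination h2
  have hd3 : (X 3 : MvPowerSeries (Fin 4) K) ∣ X 1 * A' := ⟨-P₀, by linear_combination h3⟩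
  obtain ⟨A'', rfl⟩ := dvd_of_X_dvd_X_mul (show (3 : Fin 4) ≠ 1 by decide) hd3
  exact ⟨A₁ + X 1 * A'', -A'', by ring⟩

/-- the defining ideal -/
noncomputable abbrev I (K : Type) [Field K] : Ideal (MvPowerSeries (Fin 4) K) :=
  Ideal.span {(X 0 : MvPowerSeries (Fin 4) K) * X 1 - X 2 * X 3}

/-- `x` is a non-zerodivisor in `R`. -/
lemma xreg (g : psHypersurface K)
    (h : Ideal.Quotient.mk (I K) (X 0) * g = 0) : g = 0 := by
  obtain ⟨G, rfl⟩ := Ideal.Quotient.mk_surjective g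
  rw [← map_mul, Ideal.Quotient.eq_zero_iff_mem, Ideal.mem_span_singleton] at h
  obtain ⟨H, hH⟩ := h
  rw [Ideal.Quotient.eq_zero_iff_mem, Ideal.mem_span_singleton]
  exact lemB hH

lemma x_mem_nzd : Ideal.Quotient.mk (I K) (X 0) ∈ nonZeroDivisors (psHypersurface K) := by
  rw [mem_nonZeroDivisors_iff_right]
  intro z hz
  exact xreg z (by rwa [mul_comm] at hz)

/-- The main kernel computation: the only vectors `(a₀,a₁,a₂,a₃)` with
`a₀ y = a₁ x`, `a₀ u = a₂ x`, `a₀ v = a₃ x` are the multiples of `(x,y,u,v)`. -/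
lemma main {a₀ a₁ a₂ a₃ : psHypersurface K}
    (h1 : a₀ * Ideal.Quotient.mk (I K) (X 1) = a₁ * Ideal.Quotient.mk (I K) (X 0))
    (h2 : a₀ * Ideal.Quotient.mk (I K) (X 2) = a₂ * Ideal.Quotient.mk (I K) (X 0))
    (h3 : a₀ * Ideal.Quotient.mk (I K) (X 3) = a₃ * Ideal.Quotient.mk (I K) (X 0)) :
    ∃ t : psHypersurface K,
      a₀ = t * Ideal.Quotient.mk (I K) (X 0) ∧
      a₁ = t * Ideal.Quotient.mk (I K) (X 1) ∧
      a₂ = t * Ideal.Quotient.mk (I K) (X 2) ∧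
      a₃ = t * Ideal.Quotient.mk (I K) (X 3) := by
  obtain ⟨A, rfl⟩ := Ideal.Quotient.mk_surjective a₀
  obtain ⟨B, rfl⟩ := Ideal.Quotient.mk_surjective a₁
  have hm : Ideal.Quotient.mk (I K) (A * X 1 - B * X 0) = 0 := by
    rw [map_sub, map_mul, map_mul, h1, sub_self]
  rw [Ideal.Quotient.eq_zero_iff_mem, Ideal.mem_span_singleton] at hm
  obtain ⟨P, hP⟩ := hm
  obtain ⟨T, Q, hT⟩ := lemC (A := A) (B := B) (P := P) (by linear_combination hP)
  have ht0 : Ideal.Quotient.mk (I K) A =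
      Ideal.Quotient.mk (I K) T * Ideal.Quotient.mk (I K) (X 0) := by
    rw [hT, map_add, map_mul, map_mul]
    have : Ideal.Quotient.mk (I K) ((X 0 : MvPowerSeries (Fin 4) K) * X 1 - X 2 * X 3) = 0 := by
      rw [Ideal.Quotient.eq_zero_iff_mem]
      exact Ideal.subset_span rfl
    rw [this, zero_mul, add_zero, mul_comm]
  refine ⟨Ideal.Quotient.mk (I K) T, ht0, ?_, ?_, ?_⟩
  · apply sub_eq_zero.mp
    apply xreg
    linear_combination -h1 + Ideal.Quotient.mk (I K) (X 1) * ht0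
  · apply sub_eq_zero.mp
    apply xreg
    linear_combination -h2 + Ideal.Quotient.mk (I K) (X 2) * ht0
  · apply sub_eq_zero.mp
    apply xreg
    linear_combination -h3 + Ideal.Quotient.mk (I K) (X 3) * ht0

/-- The test map whose kernel is exactly the span of `![x, y, u, v]`. -/
noncomputable def psi (K : Type) [Field K] (x y u v : psHypersurface K) :
    (Fin 4 → psHypersurface K) →ₗ[psHypersurface K] (Fin 3 → psHypersurface K) :=
  LinearMap.pi
    ![y • LinearMap.proj 0 - x • LinearMap.proj 1,
      u • LinearMap.proj 0 - x • LinearMap.proj 2,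
      v • LinearMap.proj 0 - x • LinearMap.proj 3]

lemma psi_apply (K : Type) [Field K] (x y u v : psHypersurface K)
    (a : Fin 4 → psHypersurface K) :
    psi K x y u v a = ![y * a 0 - x * a 1, u * a 0 - x * a 2, v * a 0 - x * a 3] := by
  funext i
  fin_cases i <;>
    simp [psi, LinearMap.pi_apply, LinearMap.sub_apply, LinearMap.smul_apply,
      LinearMap.proj_apply, smul_eq_mul]

lemma ker_psi (K : Type) [Field K] (x y u v : psHypersurface K)
    (hx : x = Ideal.Quotient.mk _ (MvPowerSeries.X 0))
    (hy : y = Ideal.Quotient.mk _ (MvPowerSeries.X 1))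
    (hu : u = Ideal.Quotient.mk _ (MvPowerSeries.X 2))
    (hv : v = Ideal.Quotient.mk _ (MvPowerSeries.X 3)) :
    LinearMap.ker (psi K x y u v) = Submodule.span (psHypersurface K) {![x, y, u, v]} := by
  apply le_antisymm
  · intro a ha
    rw [LinearMap.mem_ker, psi_apply] at ha
    have e0 : y * a 0 - x * a 1 = 0 := by
      have := congrFun ha 0; simpa using this
    have e1 : u * a 0 - x * a 2 = 0 := by
      have := congrFun ha 1; simpa using this
    have e2 : v * a 0 - x * a 3 = 0 := by
      have := congrFun ha 2; simpa using this
    obtain ⟨t, ht0, ht1, ht2, ht3⟩ := MprimeAux.main (a₀ := a 0) (a₁ := a 1)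
      (a₂ := a 2) (a₃ := a 3)
      (by rw [← hx, ← hy]; linear_combination e0)
      (by rw [← hx, ← hu]; linear_combination e1)
      (by rw [← hx, ← hv]; linear_combination e2)
    rw [← hx] at ht0
    rw [← hy] at ht1
    rw [← hu] at ht2
    rw [← hv] at ht3
    rw [Submodule.mem_span_singleton]
    refine ⟨t, ?_⟩
    funext i
    fin_cases i
    · exact ht0.symm
    · exact ht1.symm
    · exact ht2.symm
    · exact ht3.symm
  · rw [Submodule.span_le, Set.singleton_subset_iff]
    rw [SetLike.mem_coe, LinearMap.mem_ker, psi_apply]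
    funext i
    fin_cases i
    · show y * x - x * y = 0; ring
    · show u * x - x * u = 0; ring
    · show v * x - x * v = 0; ring

end MprimeAux

/-- For `R = K[[X,Y,U,V]]/(XY-UV)` and `M' = coker(R → R^4, 1 ↦ (x,y,u,v))`,
`M'` is torsion-free; in particular `x` is a non-zerodivisor on `M'`. -/
theorem Mprime_torsionFree (K : Type) [Field K]
    (x y u v : psHypersurface K)
    (hx : x = Ideal.Quotient.mk _ (MvPowerSeries.X 0))
    (hy : y = Ideal.Quotient.mk _ (MvPowerSeries.X 1))
    (hu : u = Ideal.Quotient.mk _ (MvPowerSeries.X 2))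
    (hv : v = Ideal.Quotient.mk _ (MvPowerSeries.X 3)) :
    Submodule.torsion (psHypersurface K) (Mprime K x y u v) = ⊥ ∧
      IsSMulRegular (Mprime K x y u v) x := by
  have hker := MprimeAux.ker_psi K x y u v hx hy hu hv
  let e : Mprime K x y u v ≃ₗ[psHypersurface K] LinearMap.range (MprimeAux.psi K x y u v) :=
    (Submodule.quotEquivOfEq _ _ hker.symm).trans (MprimeAux.psi K x y u v).quotKerEquivRange
  have htor : Submodule.torsion (psHypersurface K) (Mprime K x y u v) = ⊥ := by
    rw [Submodule.eq_bot_iff]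
    intro m hm
    rw [Submodule.mem_torsion_iff] at hm
    obtain ⟨r, hrm⟩ := hm
    have h1 : (r : psHypersurface K) • (e m) = 0 := by
      rw [← map_smul]
      rw [Submonoid.smul_def] at hrm
      rw [hrm, map_zero]
    have h2 : ((e m : Fin 3 → psHypersurface K)) = 0 := by
      have h1' : (r : psHypersurface K) • ((e m : Fin 3 → psHypersurface K)) = 0 := by
        rw [← Submodule.coe_smul, h1, Submodule.coe_zero]
      funext i
      have hc := congrFun h1' i
      rw [Pi.smul_apply, smul_eq_mul, Pi.zero_apply] at hc
      exact r.2.2 _ (by rwa [mul_comm] at hc)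
    have h3 : e m = 0 := Subtype.ext h2
    exact e.injective (by rw [h3, map_zero])
  refine ⟨htor, ?_⟩
  have hxnzd : x ∈ nonZeroDivisors (psHypersurface K) := by
    rw [hx]; exact MprimeAux.x_mem_nzd
  intro m₁ m₂ h
  have h0 : x • (m₁ - m₂) = 0 := by
    simp only at h
    rw [smul_sub x m₁ m₂, h, sub_self]
  have hmem : (m₁ - m₂) ∈ Submodule.torsion (psHypersurface K) (Mprime K x y u v) :=
    ⟨⟨x, hxnzd⟩, h0⟩
  rw [htor, Submodule.mem_bot] at hmem
  exact sub_eq_zero.mp hmem
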